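/- Let p be an odd prime, let ν ≥ 1, let F be the finite field with p^{2ν} elements, and let F₀ ⊂ F be its subfield with p^ν elements. Let ψ_p be a nontrivial additive character of F_p and set ψ(x) = ψ_p(Tr_{F/F_p}(x)). Let χ be a nontrivial multiplicative character of F whose order divides p^ν + 1. Then for every x ∈ F^× with Tr_{F/F₀}(x) = 0, one has χ(x) ∈ {1, −1} and Σ_{t∈F^×} χ(t)ψ(t) = χ(x)·p^ν; in particular this Gauss sum equals p^ν or −p^ν. -/

import Mathlib

attribute [local instance] ZMod.algebra

/-- Sum over the units of a finite field versus sum over the whole field. -/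
lemma sum_units_eq'' {F : Type*} [Field F] [Fintype F] [DecidableEq F] (f : F → ℂ) :
    ∑ t : Fˣ, f ↑t = (∑ t : F, f t) - f 0 := by
  classical
  have h1 : ∑ t : Fˣ, f ↑t = ∑ t ∈ Finset.univ.erase (0 : F), f t := by
    refine Finset.sum_bij (fun (t : Fˣ) _ => (t : F)) ?_ ?_ ?_ ?_
    · intro a _; exact Finset.mem_erase.mpr ⟨a.ne_zero, Finset.mem_univ _⟩
    · intro a _ b _ h; exact Units.ext h
    · intro b hb
      exact ⟨Units.mk0 b (Finset.mem_erase.mp hb).1, Finset.mem_univ _, rfl⟩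
    · intro a _; rfl
  rw [h1, eq_sub_iff_add_eq, Finset.sum_erase_add _ _ (Finset.mem_univ 0)]

/-- Let `p` be an odd prime, `F` the field with `p^{2ν}` elements and `F₀ ⊂ F` its subfield
with `p^ν` elements.  If `χ` is a nontrivial multiplicative character of `F` whose order
divides `p^ν + 1` and `ψ(x) = ψ_p(Tr_{F/F_p}(x))` for a nontrivial additive character `ψ_p`
of `F_p`, then for every `x ∈ F^×` with `Tr_{F/F₀}(x) = 0` one has `χ(x) ∈ {1, −1}` and
`∑_{t ∈ F^×} χ(t)ψ(t) = χ(x)·p^ν`; in particular this Gauss sum equals `p^ν` or `−p^ν`. -/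
theorem stmt8 (p : ℕ) [Fact p.Prime] (hp : p ≠ 2) (ν : ℕ) (hν : 1 ≤ ν)
    (F₀ F : Type*) [Field F₀] [Fintype F₀] [Field F] [Fintype F] [DecidableEq F]
    [CharP F p] [Algebra F₀ F]
    (hcard₀ : Fintype.card F₀ = p ^ ν) (hcard : Fintype.card F = p ^ (2 * ν))
    (ψp : AddChar (ZMod p) ℂ) (hψ : ψp ≠ 1)
    (χ : MulChar F ℂ) (hχ : χ ≠ 1) (hord : orderOf χ ∣ p ^ ν + 1)
    (x : F) (hx : x ≠ 0) (htr : Algebra.trace F₀ F x = 0) :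
    (χ x = 1 ∨ χ x = -1) ∧
      ∑ t : Fˣ, χ t * ψp (Algebra.trace (ZMod p) F t) = χ x * (p : ℂ) ^ ν := by
  classical
  haveI : CharP F₀ p := (algebraMap F₀ F).charP (algebraMap F₀ F).injective p
  haveI : IsScalarTower (ZMod p) F₀ F :=
    IsScalarTower.of_algebraMap_eq' (RingHom.ext_zmod _ _)
  have hp3 : 3 ≤ p := by
    rcases (Fact.out : p.Prime).two_le.lt_or_eq with h | h
    · omega
    · omega
  have hq3 : 3 ≤ p ^ ν := le_trans hp3 (Nat.le_self_pow (by omega) p)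
  have hcardu : Fintype.card Fˣ = (p ^ ν) ^ 2 - 1 := by
    rw [Fintype.card_units, hcard, ← pow_mul, Nat.mul_comm]
  have hchi_pow : χ ^ (p ^ ν + 1) = 1 := orderOf_dvd_iff_pow_eq_one.mp hord
  -- `χ` is trivial on the subfield `F₀`
  have K1 : ∀ c : F₀, c ≠ 0 → χ (algebraMap F₀ F c) = 1 := by
    intro c hc
    obtain ⟨g, hg⟩ := IsCyclic.exists_generator (α := Fˣ)
    have hog : orderOf g = (p ^ ν) ^ 2 - 1 := by
      rw [orderOf_eq_card_of_forall_mem_zpowers hg, Nat.card_eq_fintype_card, hcardu]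
    have hne : algebraMap F₀ F c ≠ 0 := fun h =>
      hc ((algebraMap F₀ F).injective (by rw [h, map_zero]))
    set u : Fˣ := Units.mk0 (algebraMap F₀ F c) hne with hu_def
    have hu : u ^ (p ^ ν - 1) = 1 := by
      ext
      rw [Units.val_pow_eq_pow_val, Units.val_one, hu_def, Units.val_mk0, ← map_pow, ← hcard₀,
        FiniteField.pow_card_sub_one_eq_one c hc, map_one]
    obtain ⟨k, hk0⟩ := hg u
    have hk : g ^ k = u := hk0
    have hq3' : (3:ℤ) ≤ (p:ℤ) ^ ν := by exact_mod_cast hq3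
    have hdvd : (((p ^ ν) ^ 2 - 1 : ℕ) : ℤ) ∣ k * ((p ^ ν : ℤ) - 1) := by
      rw [← hog]
      rw [orderOf_dvd_iff_zpow_eq_one]
      have : (g ^ k) ^ ((p ^ ν : ℤ) - 1) = 1 := by
        rw [hk]
        have : ((p ^ ν : ℤ) - 1) = ((p ^ ν - 1 : ℕ) : ℤ) := by
          have h1 : 1 ≤ p ^ ν := by omega
          push_cast [h1]
          ring
        rw [this, zpow_natCast, hu]
      rw [← zpow_mul, mul_comm] at this
      rw [mul_comm]
      exact this
    have hcast : (((p ^ ν) ^ 2 - 1 : ℕ) : ℤ) = ((p ^ ν : ℤ) + 1) * ((p ^ ν : ℤ) - 1) := by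
      have h1 : 1 ≤ (p ^ ν) ^ 2 := Nat.one_le_pow _ _ (by omega)
      push_cast [h1]
      ring
    obtain ⟨m, hm⟩ := hdvd
    have hq1 : ((p ^ ν : ℤ) - 1) ≠ 0 := by intro h; omega
    have hk' : k = ((p ^ ν : ℤ) + 1) * m := by
      apply mul_right_cancel₀ hq1
      rw [hm, hcast]
      ring
    have hval : χ (algebraMap F₀ F c) = ((χ.toUnitHom u : ℂˣ) : ℂ) := by
      rw [MulChar.coe_toUnitHom]
      rfl
    rw [hval, ← hk, hk']
    rw [map_zpow]
    have h1 : (χ.toUnitHom g) ^ ((p ^ ν : ℤ) + 1) = 1 := by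
      have : ((p ^ ν : ℤ) + 1) = ((p ^ ν + 1 : ℕ) : ℤ) := by push_cast; ring
      rw [this, zpow_natCast]
      ext
      push_cast
      rw [MulChar.coe_toUnitHom]
      rw [← MulChar.pow_apply_coe, hchi_pow, MulChar.one_apply_coe]
    rw [zpow_mul, h1, one_zpow, Units.val_one]
  -- the extension has degree two
  have hfr : Module.finrank F₀ F = 2 := by
    have h := Module.card_eq_pow_finrank (K := F₀) (V := F)
    rw [hcard, hcard₀, ← pow_mul] at h
    have h2 := Nat.pow_right_injective (Fact.out : p.Prime).two_le h
    have := Nat.eq_of_mul_eq_mul_left (show 0 < ν by omega)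
      (by omega : ν * 2 = ν * Module.finrank F₀ F)
    omega
  -- the kernel of the trace is the line spanned by `x`
  have hker : ∀ t : F, Algebra.trace F₀ F t = 0 ↔ ∃ c : F₀, c • x = t := by
    have hsurj : LinearMap.range (Algebra.trace F₀ F) = ⊤ :=
      LinearMap.range_eq_top.mpr (Algebra.trace_surjective F₀ F)
    have h1 : Module.finrank F₀ (LinearMap.ker (Algebra.trace F₀ F)) = 1 := by
      have h2 := LinearMap.finrank_range_add_finrank_ker (Algebra.trace F₀ F)
      rw [hsurj, finrank_top, Module.finrank_self, hfr] at h2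
      omega
    have hspan : Submodule.span F₀ {x} = LinearMap.ker (Algebra.trace F₀ F) := by
      apply Submodule.eq_of_le_of_finrank_le
      · rw [Submodule.span_le, Set.singleton_subset_iff]
        exact LinearMap.mem_ker.mpr htr
      · rw [h1, finrank_span_singleton hx]
    intro t
    rw [← LinearMap.mem_ker, ← hspan, Submodule.mem_span_singleton]
  -- Frobenius fixes `F₀`
  have hfix : ∀ c : F₀, (algebraMap F₀ F c) ^ (p ^ ν) = algebraMap F₀ F c := by
    intro c
    rw [← map_pow, ← hcard₀, FiniteField.pow_card]
  -- trace zero means `x ^ (p ^ ν) = -x`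
  have hxq : x ^ (p ^ ν) = -x := by
    let σhom : F →ₐ[F₀] F :=
      { toRingHom := iterateFrobenius F p ν,
        commutes' := fun c => hfix c }
    have hbij : Function.Bijective σhom :=
      Finite.injective_iff_bijective.mp σhom.toRingHom.injective
    let σ : F ≃ₐ[F₀] F := AlgEquiv.ofBijective σhom hbij
    have hσ : ∀ y : F, σ y = y ^ (p ^ ν) := fun y => iterateFrobenius_def p ν y
    have hσne : (1 : F ≃ₐ[F₀] F) ≠ σ := by
      intro h
      obtain ⟨g, hg⟩ := IsCyclic.exists_generator (α := Fˣ)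
      have hog : orderOf g = (p ^ ν) ^ 2 - 1 := by
        rw [orderOf_eq_card_of_forall_mem_zpowers hg, Nat.card_eq_fintype_card, hcardu]
      have hgq : (g : F) ^ (p ^ ν) = g := by
        have h2 := congrArg (fun e : F ≃ₐ[F₀] F => e (g : F)) h
        simp only [AlgEquiv.one_apply] at h2
        rw [hσ] at h2
        exact h2.symm
      have hgu : g ^ (p ^ ν) = g := Units.ext (by rw [Units.val_pow_eq_pow_val, hgq])
      have hg1 : g ^ (p ^ ν - 1) = 1 := by
        have h3 : g ^ (p ^ ν - 1) * g = g ^ (p ^ ν) := by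
          rw [← pow_succ]
          congr 1
          omega
        rw [hgu] at h3
        exact mul_right_cancel (h3.trans (one_mul g).symm)
      have hdvd := orderOf_dvd_of_pow_eq_one hg1
      rw [hog] at hdvd
      have hle := Nat.le_of_dvd (by omega) hdvd
      have : p ^ ν < (p ^ ν) ^ 2 := by nlinarith
      omega
    have hcardG : Fintype.card (F ≃ₐ[F₀] F) = 2 := by
      rw [← Nat.card_eq_fintype_card, IsGalois.card_aut_eq_finrank, hfr]
    have huniv : (Finset.univ : Finset (F ≃ₐ[F₀] F)) = {1, σ} := by
      symm
      apply Finset.eq_univ_of_card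
      rw [Finset.card_insert_of_notMem (by simpa using hσne), Finset.card_singleton, hcardG]
    have htr2 := trace_eq_sum_automorphisms (K := F₀) x
    rw [htr, map_zero, huniv, Finset.sum_insert (by simpa using hσne),
      Finset.sum_singleton, hσ x] at htr2
    have h1x : (1 : F ≃ₐ[F₀] F) x = x := rfl
    rw [h1x] at htr2
    linear_combination -htr2
  -- part 1 : `χ x` is a square root of unity
  have hchix : χ x * χ x = 1 := by
    have h1 : χ x ^ (p ^ ν + 1) = 1 := by
      rw [← MulChar.pow_apply' χ (by omega) x, hchi_pow,
        MulChar.one_apply (Ne.isUnit hx)]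
    have h2 : x ^ (p ^ ν + 1) = (-1) * (x * x) := by
      rw [pow_succ, hxq]
      ring
    have hm1 : χ (-1 : F) = 1 := by
      have h3 : (-1 : F) = algebraMap F₀ F (-1) := by rw [map_neg, map_one]
      rw [h3]
      exact K1 (-1) (neg_ne_zero.mpr one_ne_zero)
    calc χ x * χ x = χ ((-1) * (x * x)) := by rw [map_mul, map_mul, hm1, one_mul]
    _ = χ (x ^ (p ^ ν + 1)) := by rw [h2]
    _ = χ x ^ (p ^ ν + 1) := by rw [map_pow]
    _ = 1 := h1
  refine ⟨mul_self_eq_one_iff.mp hchix, ?_⟩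
  -- part 2 : the Gauss sum
  set ψ₀ : AddChar F₀ ℂ :=
    ψp.compAddMonoidHom (Algebra.trace (ZMod p) F₀).toAddMonoidHom with hψ₀def
  have hψ₀app : ∀ s : F₀, ψ₀ s = ψp (Algebra.trace (ZMod p) F₀ s) := fun s => rfl
  have hψ₀ : ψ₀ ≠ 1 := by
    obtain ⟨a, ha⟩ := AddChar.ne_one_iff.mp hψ
    obtain ⟨s, hs⟩ := Algebra.trace_surjective (ZMod p) F₀ a
    exact AddChar.ne_one_iff.mpr ⟨s, by rw [hψ₀app, hs]; exact ha⟩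
  set f : F → ℂ := fun t => χ t * ψ₀ (Algebra.trace F₀ F t) with hfdef
  set S : ℂ := ∑ t : F, f t with hSdef
  -- substitution invariance
  have hSc : ∀ c : F₀ˣ,
      ∑ t : F, χ t * ψ₀ ((c : F₀) * Algebra.trace F₀ F t) = S := by
    intro c
    have hcne : (c : F₀) ≠ 0 := c.ne_zero
    have hne : algebraMap F₀ F (c : F₀) ≠ 0 := fun h =>
      hcne ((algebraMap F₀ F).injective (by rw [h, map_zero]))
    refine Fintype.sum_bijective (fun t : F => algebraMap F₀ F (c : F₀) * t)
      (mulLeft_bijective₀ _ hne) _ _ ?_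
    intro t
    have h1 : χ (algebraMap F₀ F (c : F₀) * t) = χ t := by
      rw [map_mul, K1 _ hcne, one_mul]
    have h2 : Algebra.trace F₀ F (algebraMap F₀ F (c : F₀) * t)
        = (c : F₀) * Algebra.trace F₀ F t := by
      rw [← Algebra.smul_def, map_smul, smul_eq_mul]
    rw [hfdef]
    simp only []
    rw [h1, h2]
  -- the inner character sums
  have hg : ∀ s : F₀, (∑ c : F₀ˣ, ψ₀ ((c : F₀) * s))
      = (Fintype.card F₀ : ℂ) * (if s = 0 then 1 else 0) - 1 := by
    intro s
    by_cases hs : s = 0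
    · simp only [hs, mul_zero, if_pos rfl, mul_one, if_true]
      rw [Finset.sum_congr rfl fun c _ => by rw [AddChar.map_zero_eq_one]]
      rw [Finset.sum_const, Finset.card_univ, Fintype.card_units, nsmul_eq_mul, mul_one]
      have h1 : 1 ≤ Fintype.card F₀ := Fintype.card_pos
      push_cast [h1]
      ring
    · rw [if_neg hs, mul_zero, zero_sub]
      have h1 : ∑ c : F₀ˣ, ψ₀ ((c : F₀) * s) = ∑ c : F₀ˣ, ψ₀ ↑c := by
        refine (Fintype.sum_bijective (fun c : F₀ˣ => c * (Units.mk0 s hs)⁻¹)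
          (Group.mulRight_bijective _) _ _ ?_).symm
        intro c
        congr 1
        rw [Units.val_mul]
        simp only [Units.val_inv_eq_inv_val, Units.val_mk0]
        rw [mul_assoc, inv_mul_cancel₀ hs, mul_one]
      rw [h1, sum_units_eq'' (fun t : F₀ => ψ₀ t), AddChar.sum_eq_zero_of_ne_one hψ₀,
        AddChar.map_zero_eq_one, zero_sub]
  -- the sum over trace-zero elements
  have hT0 : ∑ t ∈ Finset.univ.filter (fun t : F => Algebra.trace F₀ F t = 0), χ t
      = ((Fintype.card F₀ : ℂ) - 1) * χ x := by
    have hbj : ∑ t ∈ Finset.univ.filter (fun t : F => Algebra.trace F₀ F t = 0), χ t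
        = ∑ c : F₀, χ ((c : F₀) • x) := by
      refine (Finset.sum_bij (fun (c : F₀) _ => c • x) ?_ ?_ ?_ ?_).symm
      · intro c _
        refine Finset.mem_filter.mpr ⟨Finset.mem_univ _, ?_⟩
        rw [map_smul, smul_eq_mul]
        have := (hker x).mpr ⟨1, one_smul _ _⟩
        rw [this, mul_zero]
      · intro a _ b _ h
        have h' : a • x = b • x := h
        rw [Algebra.smul_def, Algebra.smul_def] at h'
        exact (algebraMap F₀ F).injective (mul_right_cancel₀ hx h')
      · intro t ht
        obtain ⟨c, hc⟩ := (hker t).mp (Finset.mem_filter.mp ht).2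
        exact ⟨c, Finset.mem_univ _, hc⟩
      · intro c _; rfl
    rw [hbj]
    have h2 : ∀ c : F₀, χ (c • x) = (if c = 0 then 0 else 1) * χ x := by
      intro c
      by_cases hc : c = 0
      · rw [hc, if_pos rfl, zero_smul, zero_mul,
          MulChar.map_nonunit χ not_isUnit_zero]
      · rw [if_neg hc, Algebra.smul_def, map_mul, K1 c hc, one_mul]
    rw [Finset.sum_congr rfl fun c _ => h2 c, ← Finset.sum_mul]
    congr 1
    rw [Finset.sum_ite, Finset.sum_const_zero, Finset.sum_const, zero_add, nsmul_eq_mul,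
      mul_one]
    have h3 : (Finset.univ.filter fun c : F₀ => ¬c = 0) = Finset.univ.erase 0 := by
      ext c
      simp [Finset.mem_erase, and_comm]
    rw [h3, Finset.card_erase_of_mem (Finset.mem_univ _), Finset.card_univ]
    have h1 : 1 ≤ Fintype.card F₀ := Fintype.card_pos
    push_cast [h1]
    ring
  -- putting everything together
  have hmain : ((Fintype.card F₀ : ℂ) - 1) * S
      = (Fintype.card F₀ : ℂ) * (((Fintype.card F₀ : ℂ) - 1) * χ x) := by
    have hl : ∑ c : F₀ˣ, ∑ t : F, χ t * ψ₀ ((c : F₀) * Algebra.trace F₀ F t)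
        = ((Fintype.card F₀ : ℂ) - 1) * S := by
      rw [Finset.sum_congr rfl fun c _ => hSc c, Finset.sum_const, nsmul_eq_mul,
        Finset.card_univ, Fintype.card_units]
      have h1 : 1 ≤ Fintype.card F₀ := Fintype.card_pos
      push_cast [h1]
      ring
    rw [← hl, Finset.sum_comm]
    have hinner : ∀ t : F, ∑ c : F₀ˣ, χ t * ψ₀ ((c : F₀) * Algebra.trace F₀ F t)
        = χ t * ((Fintype.card F₀ : ℂ)
            * (if Algebra.trace F₀ F t = 0 then 1 else 0) - 1) := by
      intro t
      rw [← Finset.mul_sum, hg]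
    rw [Finset.sum_congr rfl fun t _ => hinner t]
    have hexp : ∀ t : F, χ t * ((Fintype.card F₀ : ℂ)
          * (if Algebra.trace F₀ F t = 0 then 1 else 0) - 1)
        = (Fintype.card F₀ : ℂ) * (if Algebra.trace F₀ F t = 0 then χ t else 0) - χ t := by
      intro t
      by_cases ht : Algebra.trace F₀ F t = 0 <;> simp [ht] <;> ring
    rw [Finset.sum_congr rfl fun t _ => hexp t, Finset.sum_sub_distrib,
      MulChar.sum_eq_zero_of_ne_one hχ, sub_zero, ← Finset.mul_sum,
      ← Finset.sum_filter, hT0]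
  have hcne : ((Fintype.card F₀ : ℂ) - 1) ≠ 0 := by
    rw [sub_ne_zero]
    intro h
    have : Fintype.card F₀ = 1 := by exact_mod_cast h
    omega
  have hS : S = (Fintype.card F₀ : ℂ) * χ x := by
    apply mul_left_cancel₀ hcne
    rw [hmain]
    ring
  have hgoal : ∀ t : Fˣ, χ (t : F) * ψp (Algebra.trace (ZMod p) F (t : F)) = f (t : F) := by
    intro t
    rw [hfdef]
    simp only []
    rw [hψ₀app, Algebra.trace_trace]
  rw [Finset.sum_congr rfl fun t _ => hgoal t, sum_units_eq'' f]
  have hf0 : f 0 = 0 := by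
    rw [hfdef]
    simp only []
    rw [MulChar.map_nonunit χ not_isUnit_zero, zero_mul]
  rw [hf0, sub_zero, ← hSdef, hS, hcard₀]
  push_cast
  ring
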